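/- Let (X,d) be a Heine–Borel metric space and p ≥ 1. Suppose μ_n → μ in the p-Wasserstein topology, R_n → R in the Kuratowski sense with R closed, and (μ,k,R) is non-singular. Then for every 1 ≤ k' ≤ k, the optimal clustering costs converge: m_{k',p}(μ_n, R_n) → m_{k',p}(μ, R). -/

import Mathlib

open Filter MeasureTheory Topology TopologicalSpace Metric Set
open scoped ENNReal NNReal

noncomputable section

/-- Kuratowski lower limit of a sequence of sets. -/
def KurLi {Y : Type*} [TopologicalSpace Y] (A : ℕ → Set Y) : Set Y :=
  {x | ∀ U ∈ nhds x, ∀ᶠ n in atTop, (U ∩ A n).Nonempty}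

/-- Kuratowski upper limit of a sequence of sets. -/
def KurLs {Y : Type*} [TopologicalSpace Y] (A : ℕ → Set Y) : Set Y :=
  {x | ∀ U ∈ nhds x, ∃ᶠ n in atTop, (U ∩ A n).Nonempty}

variable {X : Type*} [MetricSpace X] [MeasurableSpace X]

/-- The clustering cost `W_p(S,μ) = ∫ d(y,S)^p dμ(y)`. -/
def Wp (p : ℝ) (S : Set X) (μ : Measure X) : ℝ :=
  ∫ y, infDist y S ^ p ∂μ

/-- `μ` has a finite `p`-th moment. -/
def FinMom (p : ℝ) (μ : Measure X) : Prop :=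
  ∃ x : X, Integrable (fun y => dist x y ^ p) μ

/-- Convergence in the `p`-Wasserstein topology: weak convergence together with
convergence of the `p`-th moments about some point. -/
def WassTendsto (p : ℝ) (μ : ℕ → Measure X) (ν : Measure X) : Prop :=
  (∀ f : BoundedContinuousFunction X ℝ,
      Tendsto (fun n => ∫ y, f y ∂ μ n) atTop (𝓝 (∫ y, f y ∂ ν))) ∧
  ∃ x : X, Tendsto (fun n => ∫ y, dist x y ^ p ∂ μ n) atTop (𝓝 (∫ y, dist x y ^ p ∂ ν))

/-- `S` is a feasible set of cluster centers: a nonempty finite subset of `R`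
with at most `k` points. -/
def Feas (k : ℕ) (R S : Set X) : Prop :=
  S ⊆ R ∧ S.Finite ∧ S.Nonempty ∧ S.ncard ≤ k

/-- The optimal clustering cost `m_{k,p}(μ,R)`. -/
def mCost (p : ℝ) (μ : Measure X) (k : ℕ) (R : Set X) : ℝ :=
  sInf ((fun S => Wp p S μ) '' {S | Feas k R S})

/-- The set of optimal cluster-center sets `C_p(μ,k,R)`, viewed as a subset of the
hyperspace of nonempty compact subsets of `X` with the Hausdorff metric. -/
def Cp (p : ℝ) (μ : Measure X) (k : ℕ) (R : Set X) : Set (NonemptyCompacts X) :=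
  {S | Feas k R (S : Set X) ∧ ∀ T : Set X, Feas k R T → Wp p (S : Set X) μ ≤ Wp p T μ}

/-- The support of a measure on a metric space. -/
def measSupp (μ : Measure X) : Set X :=
  {x | ∀ r : ℝ, 0 < r → μ (Metric.ball x r) ≠ 0}

set_option linter.unusedSectionVars false
set_option linter.unusedVariables false

namespace Stmt13Aux


lemma le_infDist' {X : Type*} [MetricSpace X] {s : Set X} {b : ℝ} {x : X}
    (hs : s.Nonempty) (h : ∀ y ∈ s, b ≤ dist x y) : b ≤ infDist x s := by
  by_contra hlt
  push_neg at hlt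
  obtain ⟨y, hy, hd⟩ := (infDist_lt_iff hs).1 hlt
  exact absurd hd (not_lt.2 (h y hy))

lemma two_rpow_bound {p a b : ℝ} (hp : 0 ≤ p) (ha : 0 ≤ a) (hb : 0 ≤ b) :
    (a + b) ^ p ≤ 2 ^ p * (a ^ p + b ^ p) := by
  have h1 : a + b ≤ 2 * max a b := by
    rcases max_cases a b with ⟨h, h'⟩ | ⟨h, h'⟩ <;> nlinarith
  have h2 : (a + b) ^ p ≤ (2 * max a b) ^ p :=
    Real.rpow_le_rpow (by positivity) h1 hp
  have h3 : (2 * max a b : ℝ) ^ p = 2 ^ p * (max a b) ^ p :=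
    Real.mul_rpow (by norm_num) (le_max_of_le_left ha)
  have h4 : (max a b) ^ p ≤ a ^ p + b ^ p := by
    rcases max_cases a b with ⟨h, _⟩ | ⟨h, _⟩ <;> rw [h]
    · nlinarith [Real.rpow_nonneg hb p]
    · nlinarith [Real.rpow_nonneg ha p]
  calc (a + b) ^ p ≤ 2 ^ p * (max a b) ^ p := h3 ▸ h2
    _ ≤ 2 ^ p * (a ^ p + b ^ p) := by
        have : (0:ℝ) ≤ 2 ^ p := Real.rpow_nonneg (by norm_num) p
        nlinarith

lemma eta_rpow_bound {p a δ η : ℝ} (hp : 0 ≤ p) (ha : 0 ≤ a) (hδ : 0 ≤ δ) (hη : 0 < η) :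
    (a + δ) ^ p ≤ (1 + η) ^ p * a ^ p + (1 + η⁻¹) ^ p * δ ^ p := by
  have hη' : (0:ℝ) < η⁻¹ := inv_pos.2 hη
  have key : a + δ ≤ max ((1 + η) * a) ((1 + η⁻¹) * δ) := by
    rcases le_total δ (η * a) with h | h
    · refine le_max_of_le_left ?_; nlinarith
    · refine le_max_of_le_right ?_
      have h1 : a ≤ η⁻¹ * δ := by
        have := mul_le_mul_of_nonneg_left h (le_of_lt hη')
        calc a = η⁻¹ * (η * a) := by field_simp
          _ ≤ η⁻¹ * δ := this
      nlinarith
  have h2 : (a + δ) ^ p ≤ (max ((1 + η) * a) ((1 + η⁻¹) * δ)) ^ p :=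
    Real.rpow_le_rpow (by positivity) key hp
  have h3 : (max ((1 + η) * a) ((1 + η⁻¹) * δ)) ^ p
      ≤ ((1 + η) * a) ^ p + ((1 + η⁻¹) * δ) ^ p := by
    rcases max_cases ((1 + η) * a) ((1 + η⁻¹) * δ) with ⟨h, _⟩ | ⟨h, _⟩ <;> rw [h]
    · nlinarith [Real.rpow_nonneg (by positivity : (0:ℝ) ≤ (1 + η⁻¹) * δ) p]
    · nlinarith [Real.rpow_nonneg (by positivity : (0:ℝ) ≤ (1 + η) * a) p]
  have e1 : ((1 + η) * a) ^ p = (1 + η) ^ p * a ^ p := Real.mul_rpow (by positivity) ha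
  have e2 : ((1 + η⁻¹) * δ) ^ p = (1 + η⁻¹) ^ p * δ ^ p := Real.mul_rpow (by positivity) hδ
  calc (a + δ) ^ p ≤ ((1 + η) * a) ^ p + ((1 + η⁻¹) * δ) ^ p := le_trans h2 h3
    _ = (1 + η) ^ p * a ^ p + (1 + η⁻¹) ^ p * δ ^ p := by rw [e1, e2]

/-- max (a - b) 0 = a - min a b -/
lemma max_sub_zero_eq (a b : ℝ) : max (a - b) 0 = a - min a b := by
  rcases le_total a b with h | h <;>
    simp [max_eq_left, max_eq_right, min_eq_left, min_eq_right, h, sub_nonneg, sub_nonpos]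


section Meas

variable {X : Type*} [MetricSpace X] [MeasurableSpace X] [BorelSpace X]

lemma cont_dist_rpow {p : ℝ} (hp : 0 ≤ p) (x : X) :
    Continuous fun y => dist x y ^ p :=
  (continuous_const.dist continuous_id).rpow_const (fun _ => Or.inr hp)

lemma cont_infDist_rpow {p : ℝ} (hp : 0 ≤ p) (S : Set X) :
    Continuous fun y => infDist y S ^ p :=
  (continuous_infDist_pt S).rpow_const (fun _ => Or.inr hp)

lemma integrable_dist_rpow {p : ℝ} (hp : 0 ≤ p) {μ : Measure X} [IsFiniteMeasure μ]
    (hμ : FinMom p μ) (x : X) : Integrable (fun y => dist x y ^ p) μ := by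
  obtain ⟨w, hw⟩ := hμ
  have hbd : ∀ y, ‖dist x y ^ p‖ ≤ 2 ^ p * dist x w ^ p + 2 ^ p * dist w y ^ p := by
    intro y
    rw [Real.norm_of_nonneg (Real.rpow_nonneg dist_nonneg p)]
    have h1 : dist x y ≤ dist x w + dist w y := dist_triangle x w y
    have h2 : dist x y ^ p ≤ (dist x w + dist w y) ^ p :=
      Real.rpow_le_rpow dist_nonneg h1 hp
    have h3 := two_rpow_bound hp (dist_nonneg : (0:ℝ) ≤ dist x w)
      (dist_nonneg : (0:ℝ) ≤ dist w y)
    linarith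
  have hint : Integrable (fun y => 2 ^ p * dist x w ^ p + 2 ^ p * dist w y ^ p) μ :=
    (integrable_const _).add (hw.const_mul _)
  exact Integrable.mono' hint ((cont_dist_rpow hp x).aestronglyMeasurable)
    (Filter.Eventually.of_forall hbd)

lemma infDist_rpow_growth {p : ℝ} (hp : 0 ≤ p) {S : Set X} {s : X} (hs : s ∈ S) (x : X) :
    ∀ y, infDist y S ^ p ≤ 2 ^ p * dist s x ^ p + 2 ^ p * dist x y ^ p := by
  intro y
  have h1 : infDist y S ≤ dist s x + dist x y := by
    calc infDist y S ≤ dist y s := infDist_le_dist_of_mem hs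
      _ ≤ dist y x + dist x s := dist_triangle y x s
      _ = dist s x + dist x y := by rw [dist_comm y x, dist_comm x s]; ring
  calc infDist y S ^ p ≤ (dist s x + dist x y) ^ p :=
        Real.rpow_le_rpow infDist_nonneg h1 hp
    _ ≤ 2 ^ p * (dist s x ^ p + dist x y ^ p) := two_rpow_bound hp dist_nonneg dist_nonneg
    _ = 2 ^ p * dist s x ^ p + 2 ^ p * dist x y ^ p := by ring

lemma integrable_infDist_rpow {p : ℝ} (hp : 0 ≤ p) {μ : Measure X} [IsFiniteMeasure μ]
    (hμ : FinMom p μ) {S : Set X} (hS : S.Nonempty) :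
    Integrable (fun y => infDist y S ^ p) μ := by
  obtain ⟨s, hs⟩ := hS
  obtain ⟨w, hw⟩ := hμ
  have hint : Integrable (fun y => 2 ^ p * dist s w ^ p + 2 ^ p * dist w y ^ p) μ :=
    (integrable_const _).add (hw.const_mul _)
  refine Integrable.mono' hint ((cont_infDist_rpow hp S).aestronglyMeasurable)
    (Filter.Eventually.of_forall fun y => ?_)
  rw [Real.norm_of_nonneg (Real.rpow_nonneg infDist_nonneg p)]
  exact infDist_rpow_growth hp hs w y

lemma Wp_nonneg (p : ℝ) (S : Set X) (μ : Measure X) : 0 ≤ Wp p S μ :=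
  integral_nonneg fun y => Real.rpow_nonneg infDist_nonneg p

lemma feas_singleton {k : ℕ} (hk : 1 ≤ k) {R : Set X} {x : X} (hx : x ∈ R) :
    Feas k R {x} :=
  ⟨singleton_subset_iff.2 hx, finite_singleton x, singleton_nonempty x,
    by simpa [Set.ncard_singleton] using hk⟩

lemma feas_set_nonempty {k : ℕ} (hk : 1 ≤ k) {R : Set X} (hR : R.Nonempty) (μ : Measure X)
    (p : ℝ) : ((fun S => Wp p S μ) '' {S | Feas k R S}).Nonempty := by
  obtain ⟨x, hx⟩ := hR
  exact ⟨Wp p {x} μ, ⟨{x}, feas_singleton hk hx, rfl⟩⟩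

lemma bddBelow_wp (k : ℕ) (R : Set X) (μ : Measure X) (p : ℝ) :
    BddBelow ((fun S => Wp p S μ) '' {S | Feas k R S}) :=
  ⟨0, fun _ ⟨S, _, hS⟩ => hS ▸ Wp_nonneg p S μ⟩

lemma mCost_nonneg (p : ℝ) (μ : Measure X) (k : ℕ) (R : Set X) : 0 ≤ mCost p μ k R := by
  rcases ((fun S => Wp p S μ) '' {S | Feas k R S}).eq_empty_or_nonempty with h | h
  · simp [mCost, h, Real.sInf_empty]
  · exact le_csInf h (fun b ⟨S, _, hS⟩ => hS ▸ Wp_nonneg p S μ)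

lemma mCost_le_wp {p : ℝ} {μ : Measure X} {k : ℕ} {R S : Set X} (h : Feas k R S) :
    mCost p μ k R ≤ Wp p S μ :=
  csInf_le (bddBelow_wp k R μ p) ⟨S, h, rfl⟩

lemma exists_feas_lt {p : ℝ} {μ : Measure X} {k : ℕ} {R : Set X} {c : ℝ}
    (hk : 1 ≤ k) (hR : R.Nonempty) (h : mCost p μ k R < c) :
    ∃ S : Set X, Feas k R S ∧ Wp p S μ < c := by
  obtain ⟨a, ⟨S, hS, rfl⟩, ha⟩ := exists_lt_of_csInf_lt (feas_set_nonempty hk hR μ p) h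
  exact ⟨S, hS, ha⟩

lemma exists_feas_near {p : ℝ} {μ : Measure X} {k : ℕ} {R : Set X} {ε : ℝ}
    (hk : 1 ≤ k) (hR : R.Nonempty) (hε : 0 < ε) :
    ∃ S : Set X, Feas k R S ∧ Wp p S μ < mCost p μ k R + ε := by
  obtain ⟨a, ⟨S, hS, rfl⟩, ha⟩ := Real.lt_sInf_add_pos (feas_set_nonempty hk hR μ p) hε
  exact ⟨S, hS, ha⟩

end Meas

section Growth

variable {X : Type*} [MetricSpace X] [MeasurableSpace X] [BorelSpace X]

/-- Bounded continuous truncation of a nonnegative continuous function. -/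
def bcfMin (g : X → ℝ) (hg : Continuous g) (h0 : ∀ y, 0 ≤ g y) (M : ℝ) (hM : 0 ≤ M) :
    BoundedContinuousFunction X ℝ :=
  BoundedContinuousFunction.ofNormedAddCommGroup (fun y => min (g y) M)
    (hg.min continuous_const) M
    (fun y => by rw [Real.norm_of_nonneg (le_min (h0 y) hM)]; exact min_le_right _ _)

lemma bcfMin_apply (g : X → ℝ) (hg : Continuous g) (h0 : ∀ y, 0 ≤ g y) (M : ℝ) (hM : 0 ≤ M)
    (y : X) : bcfMin g hg h0 M hM y = min (g y) M := rfl

lemma excess_tendsto {p : ℝ} (hp : 0 ≤ p)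
    (μ : ℕ → Measure X) (ν : Measure X) [∀ n, IsProbabilityMeasure (μ n)]
    [IsProbabilityMeasure ν] (hμm : ∀ n, FinMom p (μ n)) (hνm : FinMom p ν)
    (hbcf : ∀ f : BoundedContinuousFunction X ℝ,
      Tendsto (fun n => ∫ y, f y ∂ μ n) atTop (𝓝 (∫ y, f y ∂ ν)))
    (x₁ : X)
    (hmom : Tendsto (fun n => ∫ y, dist x₁ y ^ p ∂ μ n) atTop (𝓝 (∫ y, dist x₁ y ^ p ∂ ν)))
    {M : ℝ} (hM : 0 ≤ M) :
    Tendsto (fun n => ∫ y, max (dist x₁ y ^ p - M) 0 ∂ μ n) atTop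
      (𝓝 (∫ y, max (dist x₁ y ^ p - M) 0 ∂ ν)) := by
  have hre : ∀ (ρ : Measure X) [IsProbabilityMeasure ρ], FinMom p ρ →
      ∫ y, max (dist x₁ y ^ p - M) 0 ∂ ρ
        = (∫ y, dist x₁ y ^ p ∂ ρ) - ∫ y, (bcfMin _ (cont_dist_rpow hp x₁)
            (fun y => Real.rpow_nonneg dist_nonneg p) M hM) y ∂ ρ := by
    intro ρ _ hρ
    rw [← integral_sub (integrable_dist_rpow hp hρ x₁)
      ((bcfMin _ (cont_dist_rpow hp x₁) _ M hM).integrable ρ)]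
    congr 1
    ext y
    rw [bcfMin_apply]
    exact max_sub_zero_eq _ _
  rw [hre ν hνm]
  have := Tendsto.sub hmom
    (hbcf (bcfMin _ (cont_dist_rpow hp x₁) (fun y => Real.rpow_nonneg dist_nonneg p) M hM))
  refine Tendsto.congr (fun n => ?_) this
  rw [hre (μ n) (hμm n)]

lemma excess_nu_tendsto_zero {p : ℝ} (hp : 0 ≤ p) (ν : Measure X)
    [IsProbabilityMeasure ν] (hνm : FinMom p ν) (x₁ : X) :
    Tendsto (fun m : ℕ => ∫ y, max (dist x₁ y ^ p - m) 0 ∂ ν) atTop (𝓝 0) := by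
  have key : Tendsto (fun m : ℕ => ∫ y, max (dist x₁ y ^ p - m) 0 ∂ ν) atTop
      (𝓝 (∫ _y, (0:ℝ) ∂ ν)) := by
    refine tendsto_integral_of_dominated_convergence (fun y => dist x₁ y ^ p)
      (fun m => ((cont_dist_rpow hp x₁).sub continuous_const).max
        continuous_const |>.aestronglyMeasurable)
      (integrable_dist_rpow hp hνm x₁) (fun m => Filter.Eventually.of_forall fun y => ?_)
      (Filter.Eventually.of_forall fun y => ?_)
    · rw [Real.norm_of_nonneg (le_max_right _ _)]
      have h0 : (0:ℝ) ≤ dist x₁ y ^ p := Real.rpow_nonneg dist_nonneg p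
      rcases max_cases (dist x₁ y ^ p - (m:ℝ)) 0 with ⟨h, _⟩ | ⟨h, _⟩ <;> rw [h]
      · have : (0:ℝ) ≤ (m:ℝ) := Nat.cast_nonneg m
        linarith
      · exact h0
    · have hev : ∀ᶠ m : ℕ in atTop, max (dist x₁ y ^ p - (m:ℝ)) 0 = 0 := by
        have := tendsto_natCast_atTop_atTop (R := ℝ)
        filter_upwards [this.eventually_ge_atTop (dist x₁ y ^ p)] with m hm
        exact max_eq_right (by linarith)
      exact Tendsto.congr' (hev.mono fun m hm => hm.symm) tendsto_const_nhds
  simpa using key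

/-- Key uniform-integrability lemma: convergence of integrals of continuous functions of
`p`-growth under Wasserstein convergence. -/
lemma tendsto_integral_of_growth {p : ℝ} (hp : 0 ≤ p)
    (μ : ℕ → Measure X) (ν : Measure X) [∀ n, IsProbabilityMeasure (μ n)]
    [IsProbabilityMeasure ν] (hμm : ∀ n, FinMom p (μ n)) (hνm : FinMom p ν)
    (hbcf : ∀ f : BoundedContinuousFunction X ℝ,
      Tendsto (fun n => ∫ y, f y ∂ μ n) atTop (𝓝 (∫ y, f y ∂ ν)))
    (x₁ : X)
    (hmom : Tendsto (fun n => ∫ y, dist x₁ y ^ p ∂ μ n) atTop (𝓝 (∫ y, dist x₁ y ^ p ∂ ν)))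
    {g : X → ℝ} (hg : Continuous g) (hg0 : ∀ y, 0 ≤ g y)
    {A B : ℝ} (hB : 0 ≤ B) (hgrow : ∀ y, g y ≤ A + B * dist x₁ y ^ p) :
    Tendsto (fun n => ∫ y, g y ∂ μ n) atTop (𝓝 (∫ y, g y ∂ ν)) := by
  have hIntg : ∀ (ρ : Measure X) [IsProbabilityMeasure ρ], FinMom p ρ → Integrable g ρ := by
    intro ρ _ hρ
    refine Integrable.mono' ((integrable_const A).add
      ((integrable_dist_rpow hp hρ x₁).const_mul B)) hg.aestronglyMeasurable
      (Filter.Eventually.of_forall fun y => ?_)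
    rw [Real.norm_of_nonneg (hg0 y)]
    exact hgrow y
  rw [Metric.tendsto_atTop]
  intro ε hε
  set B' : ℝ := 2 * B + 2 with hB'
  have hB'pos : 0 < B' := by positivity
  set ε' : ℝ := ε / B' with hε'
  have hε'pos : 0 < ε' := by positivity
  -- choose the truncation level
  obtain ⟨M', hM'⟩ : ∃ M' : ℕ, ∫ y, max (dist x₁ y ^ p - M') 0 ∂ ν < ε' := by
    have := (excess_nu_tendsto_zero hp ν hνm x₁).eventually_lt_const hε'pos
    exact this.exists
  have hM'0 : (0:ℝ) ≤ (M' : ℝ) := Nat.cast_nonneg M'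
  have hTn : ∀ᶠ n in atTop, ∫ y, max (dist x₁ y ^ p - M') 0 ∂ μ n < ε' :=
    (excess_tendsto hp μ ν hμm hνm hbcf x₁ hmom hM'0).eventually_lt_const hM'
  set M : ℝ := max A 0 + B * M' with hM
  have hM0 : 0 ≤ M := by positivity
  set gM := bcfMin g hg hg0 M hM0 with hgM
  have hMid : ∀ᶠ n in atTop, dist (∫ y, gM y ∂ μ n) (∫ y, gM y ∂ ν) < ε' :=
    Metric.tendsto_nhds.mp (hbcf gM) ε' hε'pos
  -- pointwise: g - min g M ≤ B * max (d^p - M') 0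
  have hpt : ∀ y, g y - min (g y) M ≤ B * max (dist x₁ y ^ p - M') 0 := by
    intro y
    rcases le_total (g y) M with h | h
    · rw [min_eq_left h]
      have : (0:ℝ) ≤ B * max (dist x₁ y ^ p - M') 0 :=
        mul_nonneg hB (le_max_right _ _)
      linarith
    · rw [min_eq_right h]
      have h1 : g y - M ≤ B * (dist x₁ y ^ p - M') := by
        have := hgrow y
        have hA : A ≤ max A 0 := le_max_left _ _
        rw [hM]; ring_nf; nlinarith
      calc g y - M ≤ B * (dist x₁ y ^ p - M') := h1
        _ ≤ B * max (dist x₁ y ^ p - M') 0 :=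
            mul_le_mul_of_nonneg_left (le_max_left _ _) hB
  -- integral gap bound for any probability measure with finite moment
  have hgap : ∀ (ρ : Measure X) [IsProbabilityMeasure ρ], FinMom p ρ →
      (0 ≤ (∫ y, g y ∂ ρ) - ∫ y, gM y ∂ ρ ∧
        (∫ y, g y ∂ ρ) - (∫ y, gM y ∂ ρ) ≤ B * ∫ y, max (dist x₁ y ^ p - M') 0 ∂ ρ) := by
    intro ρ _ hρ
    have hint_g := hIntg ρ hρ
    have hint_gM := gM.integrable ρ
    have hint_ex : Integrable (fun y => max (dist x₁ y ^ p - M') 0) ρ := by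
      have : (fun y => max (dist x₁ y ^ p - (M':ℝ)) 0)
          = fun y => dist x₁ y ^ p - min (dist x₁ y ^ p) M' := by
        ext y; exact max_sub_zero_eq _ _
      rw [this]
      exact (integrable_dist_rpow hp hρ x₁).sub
        ((bcfMin _ (cont_dist_rpow hp x₁) (fun y => Real.rpow_nonneg dist_nonneg p)
          M' hM'0).integrable ρ)
    constructor
    · rw [← integral_sub hint_g hint_gM]
      refine integral_nonneg fun y => ?_
      simp only [hgM, bcfMin_apply]
      exact sub_nonneg.2 (min_le_left _ _)
    · rw [← integral_sub hint_g hint_gM, ← MeasureTheory.integral_const_mul]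
      refine integral_mono (hint_g.sub hint_gM) (hint_ex.const_mul B) fun y => ?_
      simp only [hgM, bcfMin_apply]
      exact hpt y
  rw [Filter.eventually_atTop] at hTn hMid
  obtain ⟨N₁, hN₁⟩ := hTn
  obtain ⟨N₂, hN₂⟩ := hMid
  refine ⟨max N₁ N₂, fun n hn => ?_⟩
  have h1 := hgap (μ n) (hμm n)
  have h2 := hgap ν hνm
  have hexn := hN₁ n (le_trans (le_max_left _ _) hn)
  have hmid := hN₂ n (le_trans (le_max_right _ _) hn)
  rw [Real.dist_eq] at hmid ⊢
  have hBμ : (∫ y, g y ∂ μ n) - (∫ y, gM y ∂ μ n) ≤ B * ε' := by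
    calc (∫ y, g y ∂ μ n) - (∫ y, gM y ∂ μ n)
        ≤ B * ∫ y, max (dist x₁ y ^ p - M') 0 ∂ μ n := h1.2
      _ ≤ B * ε' := mul_le_mul_of_nonneg_left (le_of_lt hexn) hB
  have hBν : (∫ y, g y ∂ ν) - (∫ y, gM y ∂ ν) ≤ B * ε' := by
    calc (∫ y, g y ∂ ν) - (∫ y, gM y ∂ ν)
        ≤ B * ∫ y, max (dist x₁ y ^ p - M') 0 ∂ ν := h2.2
      _ ≤ B * ε' := mul_le_mul_of_nonneg_left (le_of_lt hM') hB
  have habs : |(∫ y, g y ∂ μ n) - ∫ y, g y ∂ ν|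
      ≤ ((∫ y, g y ∂ μ n) - ∫ y, gM y ∂ μ n) + |(∫ y, gM y ∂ μ n) - ∫ y, gM y ∂ ν|
        + ((∫ y, g y ∂ ν) - ∫ y, gM y ∂ ν) := by
    have t1 := h1.1
    have t2 := h2.1
    rw [abs_le]
    constructor <;> [skip; skip] <;> cases' abs_le.1 (le_refl |(∫ y, gM y ∂ μ n) - ∫ y, gM y ∂ ν|) with u1 u2 <;>
      [nlinarith [abs_nonneg ((∫ y, gM y ∂ μ n) - ∫ y, gM y ∂ ν), neg_abs_le ((∫ y, gM y ∂ μ n) - ∫ y, gM y ∂ ν), le_abs_self ((∫ y, gM y ∂ μ n) - ∫ y, gM y ∂ ν)];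
       nlinarith [abs_nonneg ((∫ y, gM y ∂ μ n) - ∫ y, gM y ∂ ν), neg_abs_le ((∫ y, gM y ∂ μ n) - ∫ y, gM y ∂ ν), le_abs_self ((∫ y, gM y ∂ μ n) - ∫ y, gM y ∂ ν)]]
  calc |(∫ y, g y ∂ μ n) - ∫ y, g y ∂ ν|
      ≤ ((∫ y, g y ∂ μ n) - ∫ y, gM y ∂ μ n) + |(∫ y, gM y ∂ μ n) - ∫ y, gM y ∂ ν|
        + ((∫ y, g y ∂ ν) - ∫ y, gM y ∂ ν) := habs
    _ < B * ε' + ε' + B * ε' := by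
        have := h1.1
        have := h2.1
        nlinarith
    _ ≤ ε := by
        have he : B * ε' + ε' + B * ε' = (2*B+1) * ε' := by ring
        rw [he]
        have h2' : (2*B+1) * ε' ≤ B' * ε' := by nlinarith [hε'pos.le]
        have h3' : B' * ε' = ε := by rw [hε']; field_simp
        linarith

end Growth

section Tools

variable {X : Type*} [MetricSpace X] [ProperSpace X]

/-- A continuous cutoff: 1 on `ball x₁ r`, 0 outside `ball x₁ (2r)`, values in `[0,1]`. -/
def cutoff (x₁ : X) (r : ℝ) : BoundedContinuousFunction X ℝ :=
  BoundedContinuousFunction.ofNormedAddCommGroup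
    (fun y => max 0 (min 1 (2 - dist x₁ y / r)))
    (continuous_const.max (continuous_const.min
      (continuous_const.sub ((continuous_const.dist continuous_id).div_const r)))) 1
    (fun y => by
      rw [Real.norm_of_nonneg (le_max_left _ _)]
      rcases max_cases (0:ℝ) (min 1 (2 - dist x₁ y / r)) with ⟨h, _⟩ | ⟨h, _⟩ <;> rw [h]
      · norm_num
      · exact le_trans (min_le_left _ _) le_rfl)

lemma cutoff_apply (x₁ : X) (r : ℝ) (y : X) :
    cutoff x₁ r y = max 0 (min 1 (2 - dist x₁ y / r)) := rfl

lemma cutoff_nonneg (x₁ : X) (r : ℝ) (y : X) : 0 ≤ cutoff x₁ r y := le_max_left _ _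

lemma cutoff_le_one (x₁ : X) (r : ℝ) (y : X) : cutoff x₁ r y ≤ 1 := by
  rw [cutoff_apply]
  rcases max_cases (0:ℝ) (min 1 (2 - dist x₁ y / r)) with ⟨h, _⟩ | ⟨h, _⟩ <;> rw [h]
  · norm_num
  · exact min_le_left _ _

lemma cutoff_eq_one {x₁ : X} {r : ℝ} (hr : 0 < r) {y : X} (h : dist x₁ y ≤ r) :
    cutoff x₁ r y = 1 := by
  rw [cutoff_apply]
  have h1 : (1:ℝ) ≤ 2 - dist x₁ y / r := by
    have : dist x₁ y / r ≤ 1 := (div_le_one hr).2 h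
    linarith
  rw [min_eq_left h1, max_eq_right (by norm_num)]

lemma cutoff_eq_zero {x₁ : X} {r : ℝ} (hr : 0 < r) {y : X} (h : 2 * r ≤ dist x₁ y) :
    cutoff x₁ r y = 0 := by
  rw [cutoff_apply]
  have h1 : 2 - dist x₁ y / r ≤ 0 := by
    have : (2:ℝ) ≤ dist x₁ y / r := (le_div_iff₀ hr).2 (by linarith)
    linarith
  rw [max_eq_left (le_trans (min_le_right _ _) h1)]

open Classical in
/-- Nearest-point approximation in a closed set (junk value if the set is empty). -/
def apx (Rn : Set X) (hRn : IsClosed Rn) (x : X) : X :=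
  if h : Rn.Nonempty then (hRn.exists_infDist_eq_dist h x).choose else x

lemma apx_mem {Rn : Set X} (hRn : IsClosed Rn) (h : Rn.Nonempty) (x : X) :
    apx Rn hRn x ∈ Rn := by
  rw [apx]
  rw [dif_pos h]
  exact (hRn.exists_infDist_eq_dist h x).choose_spec.1

lemma apx_dist {Rn : Set X} (hRn : IsClosed Rn) (h : Rn.Nonempty) (x : X) :
    dist x (apx Rn hRn x) = infDist x Rn := by
  rw [apx]
  rw [dif_pos h]
  exact (hRn.exists_infDist_eq_dist h x).choose_spec.2.symm

/-- From the Kuratowski lower limit: the nearest-point approximations converge. -/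
lemma apx_tendsto {R : ℕ → Set X} (hRc : ∀ n, IsClosed (R n)) {x : X}
    (hx : x ∈ KurLi R) :
    Tendsto (fun n => dist x (apx (R n) (hRc n) x)) atTop (𝓝 0) := by
  rw [Metric.tendsto_nhds]
  intro ε hε
  have := hx (Metric.ball x ε) (Metric.ball_mem_nhds x hε)
  filter_upwards [this] with n ⟨t, ht, htR⟩
  have hne : (R n).Nonempty := ⟨t, htR⟩
  rw [Real.dist_eq, sub_zero, abs_of_nonneg dist_nonneg, apx_dist (hRc n) hne]
  calc infDist x (R n) ≤ dist x t := infDist_le_dist_of_mem htR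
    _ < ε := by rwa [mem_ball, dist_comm] at ht

lemma eventually_R_nonempty {R : ℕ → Set X} {x : X} (hx : x ∈ KurLi R) :
    ∀ᶠ n in atTop, (R n).Nonempty := by
  have := hx univ univ_mem
  filter_upwards [this] with n ⟨t, _, htR⟩
  exact ⟨t, htR⟩

/-- Every sequence in a proper space has a subsequence that either converges or escapes. -/
lemma subseq_tendsto_or_escape (x₁ : X) (y : ℕ → X) :
    ∃ φ : ℕ → ℕ, StrictMono φ ∧
      ((∃ x, Tendsto (fun n => y (φ n)) atTop (𝓝 x)) ∨
        Tendsto (fun n => dist x₁ (y (φ n))) atTop atTop) := by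
  by_cases h : ∀ C : ℝ, ∀ᶠ n in atTop, C ≤ dist x₁ (y n)
  · exact ⟨id, strictMono_id, Or.inr (Filter.tendsto_atTop.2 h)⟩
  · push_neg at h
    obtain ⟨C, hC⟩ := h
    have hC' : ∃ᶠ n in atTop, y n ∈ closedBall x₁ C := by
      refine hC.mono fun n hn => ?_
      rw [mem_closedBall, dist_comm]
      linarith [hn]
    obtain ⟨φ, hφ, hmem⟩ := Filter.extraction_of_frequently_atTop hC'
    obtain ⟨a, _, ψ, hψ, ha⟩ := (isCompact_closedBall x₁ C).tendsto_subseq hmem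
    exact ⟨φ ∘ ψ, hφ.comp hψ, Or.inl ⟨a, ha⟩⟩

/-- Simultaneous subsequence extraction for finitely many sequences. -/
lemma subseq_tendsto_or_escape_fin (x₁ : X) :
    ∀ (k : ℕ) (c : ℕ → Fin k → X),
      ∃ φ : ℕ → ℕ, StrictMono φ ∧ ∀ i : Fin k,
        ((∃ x, Tendsto (fun n => c (φ n) i) atTop (𝓝 x)) ∨
          Tendsto (fun n => dist x₁ (c (φ n) i)) atTop atTop) := by
  intro k
  induction k with
  | zero => exact fun c => ⟨id, strictMono_id, fun i => i.elim0⟩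
  | succ m ih =>
    intro c
    obtain ⟨φ₁, hφ₁, h₁⟩ := ih (fun n j => c n j.castSucc)
    obtain ⟨φ₂, hφ₂, h₂⟩ := subseq_tendsto_or_escape x₁ (fun n => c (φ₁ n) (Fin.last m))
    refine ⟨φ₁ ∘ φ₂, hφ₁.comp hφ₂, fun i => ?_⟩
    refine Fin.lastCases ?_ ?_ i
    · exact h₂
    · intro j
      rcases h₁ j with ⟨x, hx⟩ | hesc
      · exact Or.inl ⟨x, hx.comp hφ₂.tendsto_atTop⟩
      · exact Or.inr (hesc.comp hφ₂.tendsto_atTop)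

/-- A nonempty finite set of cardinality at most `k ≥ 1` is the range of a map `Fin k → X`. -/
lemma exists_range_eq {S : Set X} (hfin : S.Finite) (hne : S.Nonempty) {k : ℕ}
    (hcard : S.ncard ≤ k) : ∃ c : Fin k → X, range c = S := by
  haveI := hfin.fintype
  obtain ⟨s₀, hs₀⟩ := hne
  have hcard' : Fintype.card S ≤ k := by
    rwa [← Set.toFinset_card, ← Set.ncard_eq_toFinset_card' S]
  set e := Fintype.equivFin S with he
  refine ⟨fun i => if h : (i : ℕ) < Fintype.card S then (e.symm ⟨i, h⟩ : X) else s₀, ?_⟩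
  apply Set.eq_of_subset_of_subset
  · rintro x ⟨i, rfl⟩
    dsimp only
    by_cases h : (i : ℕ) < Fintype.card S
    · rw [dif_pos h]; exact (e.symm ⟨i, h⟩).2
    · rw [dif_neg h]; exact hs₀
  · intro x hx
    set j := e ⟨x, hx⟩ with hj
    have hjk : (j : ℕ) < k := lt_of_lt_of_le j.2 hcard'
    refine ⟨⟨j, hjk⟩, ?_⟩
    dsimp only
    rw [dif_pos (show ((⟨(j:ℕ), hjk⟩ : Fin k) : ℕ) < Fintype.card S from j.2)]
    have hje : (⟨(j:ℕ), j.2⟩ : Fin (Fintype.card S)) = j := by ext; rfl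
    rw [hje, hj, Equiv.symm_apply_apply]

/-- A limit of points along a subsequence of a sequence of sets lies in the Kuratowski
upper limit. -/
lemma mem_kurLs_of_subseq {R : ℕ → Set X} {σ : ℕ → ℕ} (hσ : Tendsto σ atTop atTop)
    {y : ℕ → X} (hy : ∀ n, y n ∈ R (σ n)) {x : X}
    (hlim : Tendsto y atTop (𝓝 x)) : x ∈ KurLs R := by
  intro U hU
  have hev : ∀ᶠ n in atTop, (U ∩ R (σ n)).Nonempty := by
    filter_upwards [hlim.eventually (eventually_mem_nhds_iff.mpr hU)] with n hn
    exact ⟨y n, mem_of_mem_nhds hn, hy n⟩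
  exact hσ.frequently hev.frequently

end Tools

section Main

variable {X : Type*} [MetricSpace X] [ProperSpace X] [MeasurableSpace X] [BorelSpace X]

lemma upper_bound {p : ℝ} (hp : 1 ≤ p) (μ : ℕ → Measure X) (ν : Measure X)
    [∀ n, IsProbabilityMeasure (μ n)] [IsProbabilityMeasure ν]
    (hμ : ∀ n, FinMom p (μ n)) (hν : FinMom p ν)
    (hbcf : ∀ f : BoundedContinuousFunction X ℝ,
      Tendsto (fun n => ∫ y, f y ∂ μ n) atTop (𝓝 (∫ y, f y ∂ ν)))
    (x₁ : X)
    (hmom : Tendsto (fun n => ∫ y, dist x₁ y ^ p ∂ μ n) atTop (𝓝 (∫ y, dist x₁ y ^ p ∂ ν)))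
    {k' : ℕ} (hk' : 1 ≤ k')
    {R : ℕ → Set X} {R₀ : Set X} (hRc : ∀ n, IsClosed (R n)) (hR₀ne : R₀.Nonempty)
    (hLi : R₀ ⊆ KurLi R) {ε : ℝ} (hε : 0 < ε) :
    ∀ᶠ n in atTop, mCost p (μ n) k' (R n) < mCost p ν k' R₀ + ε := by
  have hp0 : (0:ℝ) ≤ p := le_trans zero_le_one hp
  set m := mCost p ν k' R₀ with hm
  have hm0 : 0 ≤ m := mCost_nonneg p ν k' R₀
  obtain ⟨S, hS, hWpS⟩ := exists_feas_near (μ := ν) (p := p) hk' hR₀ne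
    (show (0:ℝ) < ε/4 by linarith)
  obtain ⟨hSsub, hSfin, hSne, hScard⟩ := hS
  obtain ⟨s₀, hs₀⟩ := id hSne
  -- convergence of the cost of the fixed set S
  have hWtend : Tendsto (fun n => Wp p S (μ n)) atTop (𝓝 (Wp p S ν)) := by
    simp only [Wp]
    refine tendsto_integral_of_growth hp0 μ ν hμ hν hbcf x₁ hmom
      (cont_infDist_rpow hp0 S) (fun y => Real.rpow_nonneg infDist_nonneg p)
      (A := 2^p * dist s₀ x₁ ^ p) (B := 2^p)
      (Real.rpow_nonneg (by norm_num) p) (fun y => ?_)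
    have := infDist_rpow_growth hp0 hs₀ x₁ y
    linarith
  -- the approximation error
  set δ : ℕ → ℝ := fun n => ∑ s ∈ hSfin.toFinset, dist s (apx (R n) (hRc n) s) with hδdef
  have hδ0 : ∀ n, 0 ≤ δ n := fun n => Finset.sum_nonneg fun s _ => dist_nonneg
  have hδ : Tendsto δ atTop (𝓝 0) := by
    have : Tendsto δ atTop (𝓝 (∑ s ∈ hSfin.toFinset, (0:ℝ))) := by
      refine tendsto_finset_sum _ fun s hs => ?_
      exact apx_tendsto hRc (hLi (hSsub (hSfin.mem_toFinset.1 hs)))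
    simpa using this
  -- choose η
  obtain ⟨η, hηpos, hηbd⟩ : ∃ η : ℝ, 0 < η ∧ (1+η)^p * (m + ε/4) < m + ε/2 := by
    have hcont : ContinuousAt (fun η : ℝ => (1+η)^p * (m + ε/4)) 0 := by
      refine ContinuousAt.mul ?_ continuousAt_const
      exact ((continuous_const.add continuous_id).rpow_const
        (fun _ => Or.inr hp0)).continuousAt
    have hval : (fun η : ℝ => (1+η)^p * (m + ε/4)) 0 = m + ε/4 := by
      norm_num [Real.one_rpow]
    have hev : ∀ᶠ η in 𝓝 (0:ℝ), (1+η)^p * (m + ε/4) < m + ε/2 := by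
      have ht := hcont.tendsto
      have h10 : ((1:ℝ) + 0) ^ p * (m + ε/4) = m + ε/4 := by norm_num [Real.one_rpow]
      rw [h10] at ht
      exact ht.eventually_lt_const (by linarith)
    rw [Metric.eventually_nhds_iff] at hev
    obtain ⟨d, hd, hball⟩ := hev
    refine ⟨d/2, by linarith, hball ?_⟩
    rw [Real.dist_eq, sub_zero, abs_of_pos (by linarith : (0:ℝ) < d/2)]
    linarith
  have h1η : (0:ℝ) ≤ (1+η)^p := Real.rpow_nonneg (by linarith) p
  have h1η' : (0:ℝ) ≤ (1+η⁻¹)^p := Real.rpow_nonneg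
    (by positivity) p
  -- the second term tends to zero
  have hδp : Tendsto (fun n => (1+η⁻¹)^p * δ n ^ p) atTop (𝓝 0) := by
    have h1 : Tendsto (fun n => δ n ^ p) atTop (𝓝 ((0:ℝ) ^ p)) :=
      hδ.rpow_const (Or.inr hp0)
    rw [Real.zero_rpow (by linarith : p ≠ 0)] at h1
    have := h1.const_mul ((1+η⁻¹)^p)
    simpa using this
  have hev1 : ∀ᶠ n in atTop, (R n).Nonempty := eventually_R_nonempty (hLi (hSsub hs₀))
  have hev2 : ∀ᶠ n in atTop, Wp p S (μ n) < m + ε/4 :=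
    hWtend.eventually_lt_const hWpS
  have hev3 : ∀ᶠ n in atTop, (1+η⁻¹)^p * δ n ^ p < ε/2 :=
    hδp.eventually_lt_const (by linarith)
  filter_upwards [hev1, hev2, hev3] with n hRne hWn hδn
  -- the approximate feasible set
  set Sn : Set X := (fun s => apx (R n) (hRc n) s) '' S with hSn
  have hSnfeas : Feas k' (R n) Sn := by
    refine ⟨?_, hSfin.image _, hSne.image _, ?_⟩
    · rintro _ ⟨s, hsS, rfl⟩
      exact apx_mem (hRc n) hRne s
    · exact le_trans (Set.ncard_image_le hSfin) hScard
  have hmle : mCost p (μ n) k' (R n) ≤ Wp p Sn (μ n) := mCost_le_wp hSnfeas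
  -- pointwise estimate
  have hpt : ∀ y, infDist y Sn ^ p ≤ (1+η)^p * infDist y S ^ p + (1+η⁻¹)^p * δ n ^ p := by
    intro y
    obtain ⟨s', hs'S, hs'd⟩ := (hSfin.isCompact).exists_infDist_eq_dist hSne y
    have h1 : infDist y Sn ≤ infDist y S + δ n := by
      calc infDist y Sn ≤ dist y (apx (R n) (hRc n) s') :=
            infDist_le_dist_of_mem (mem_image_of_mem _ hs'S)
        _ ≤ dist y s' + dist s' (apx (R n) (hRc n) s') := dist_triangle _ _ _
        _ ≤ infDist y S + δ n := by
            rw [← hs'd]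
            have : dist s' (apx (R n) (hRc n) s') ≤ δ n := by
              simp only [hδdef]
              exact Finset.single_le_sum (f := fun s => dist s (apx (R n) (hRc n) s))
                (fun s _ => dist_nonneg) (hSfin.mem_toFinset.2 hs'S)
            linarith
    calc infDist y Sn ^ p ≤ (infDist y S + δ n) ^ p :=
          Real.rpow_le_rpow infDist_nonneg h1 hp0
      _ ≤ (1+η)^p * infDist y S ^ p + (1+η⁻¹)^p * δ n ^ p :=
          eta_rpow_bound hp0 infDist_nonneg (hδ0 n) hηpos
  -- integrate
  have hint1 : Integrable (fun y => infDist y Sn ^ p) (μ n) :=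
    integrable_infDist_rpow hp0 (hμ n) (hSne.image _)
  have hint2 : Integrable (fun y => infDist y S ^ p) (μ n) :=
    integrable_infDist_rpow hp0 (hμ n) hSne
  have hRHSint : ∫ y, ((1+η)^p * infDist y S ^ p + (1+η⁻¹)^p * δ n ^ p) ∂ (μ n)
      = (1+η)^p * Wp p S (μ n) + (1+η⁻¹)^p * δ n ^ p := by
    rw [integral_add (hint2.const_mul _) (integrable_const _), integral_const_mul,
      integral_const, probReal_univ]
    simp [Wp]
  have hWSn : Wp p Sn (μ n) ≤ (1+η)^p * Wp p S (μ n) + (1+η⁻¹)^p * δ n ^ p := by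
    have hmono := integral_mono (μ := μ n) (f := fun y => infDist y Sn ^ p)
      (g := fun y => (1+η)^p * infDist y S ^ p + (1+η⁻¹)^p * δ n ^ p) hint1
      (by exact (hint2.const_mul ((1+η)^p)).add (integrable_const ((1+η⁻¹)^p * δ n ^ p))) hpt
    rw [hRHSint] at hmono
    exact hmono
  calc mCost p (μ n) k' (R n) ≤ Wp p Sn (μ n) := hmle
    _ ≤ (1+η)^p * Wp p S (μ n) + (1+η⁻¹)^p * δ n ^ p := hWSn
    _ < (1+η)^p * (m + ε/4) + ε/2 := by
        have hWn0 : 0 ≤ Wp p S (μ n) := Wp_nonneg p S (μ n)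
        have := mul_le_mul_of_nonneg_left hWn.le h1η
        nlinarith
    _ < m + ε := by linarith

/-- The truncated, cut-off lower-semicontinuity test function. -/
def lscTest (x₁ : X) (S : Set X) (p : ℝ) (hp : 0 ≤ p) (r δ M : ℝ) (hM : 0 ≤ M) :
    BoundedContinuousFunction X ℝ :=
  BoundedContinuousFunction.ofNormedAddCommGroup
    (fun y => cutoff x₁ r y * min ((max (infDist y S - δ) 0) ^ p) M)
    (((cutoff x₁ r).continuous).mul
      (((((continuous_infDist_pt S).sub continuous_const).max
        continuous_const).rpow_const (fun _ => Or.inr hp)).min continuous_const)) M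
    (fun y => by
      have h0 : 0 ≤ min ((max (infDist y S - δ) 0) ^ p) M :=
        le_min (Real.rpow_nonneg (le_max_right _ _) p) hM
      rw [Real.norm_of_nonneg (mul_nonneg (cutoff_nonneg _ _ _) h0)]
      calc cutoff x₁ r y * min ((max (infDist y S - δ) 0) ^ p) M
          ≤ 1 * M := mul_le_mul (cutoff_le_one _ _ _) (min_le_right _ _) h0 zero_le_one
        _ = M := one_mul M)

lemma lscTest_apply (x₁ : X) (S : Set X) (p : ℝ) (hp : 0 ≤ p) (r δ M : ℝ) (hM : 0 ≤ M)
    (y : X) : lscTest x₁ S p hp r δ M hM y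
      = cutoff x₁ r y * min ((max (infDist y S - δ) 0) ^ p) M := rfl

lemma lower_bound {p : ℝ} (hp : 1 ≤ p) (μ : ℕ → Measure X) (ν : Measure X)
    [∀ n, IsProbabilityMeasure (μ n)] [IsProbabilityMeasure ν]
    (hμ : ∀ n, FinMom p (μ n)) (hν : FinMom p ν)
    (hbcf : ∀ f : BoundedContinuousFunction X ℝ,
      Tendsto (fun n => ∫ y, f y ∂ μ n) atTop (𝓝 (∫ y, f y ∂ ν)))
    (x₁ : X) {k' : ℕ} (hk' : 1 ≤ k')
    {R : ℕ → Set X} {R₀ : Set X} (hRc : ∀ n, IsClosed (R n)) (hR₀ne : R₀.Nonempty)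
    (hLi : R₀ ⊆ KurLi R) (hLs : KurLs R ⊆ R₀) {ε : ℝ} (hε : 0 < ε) :
    ∀ᶠ n in atTop, mCost p ν k' R₀ - ε < mCost p (μ n) k' (R n) := by
  have hp0 : (0:ℝ) ≤ p := le_trans zero_le_one hp
  set m := mCost p ν k' R₀ with hm
  have hm0 : 0 ≤ m := mCost_nonneg p ν k' R₀
  by_contra hcon
  rw [Filter.not_eventually] at hcon
  have hfreq : ∃ᶠ n in atTop, (mCost p (μ n) k' (R n) ≤ m - ε ∧ (R n).Nonempty) := by
    obtain ⟨x₀, hx₀⟩ := hR₀ne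
    refine (hcon.mono fun n hn => not_lt.1 hn).and_eventually (eventually_R_nonempty (hLi hx₀))
  obtain ⟨φ, hφ, hφP⟩ := Filter.extraction_of_frequently_atTop hfreq
  have hTex : ∀ n, ∃ T : Set X, Feas k' (R (φ n)) T ∧ Wp p T (μ (φ n)) < m - ε/2 := by
    intro n
    refine exists_feas_lt hk' (hφP n).2 ?_
    calc mCost p (μ (φ n)) k' (R (φ n)) ≤ m - ε := (hφP n).1
      _ < m - ε/2 := by linarith
  choose T hTfeas hTW using hTex
  have hcex : ∀ n, ∃ c : Fin k' → X, range c = T n := fun n =>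
    exists_range_eq (hTfeas n).2.1 (hTfeas n).2.2.1 (hTfeas n).2.2.2
  choose c hc using hcex
  obtain ⟨ψ, hψ, hdich⟩ := subseq_tendsto_or_escape_fin x₁ k' (fun n => c n)
  have hσ : Tendsto (fun j => φ (ψ j)) atTop atTop := (hφ.comp hψ).tendsto_atTop
  set I : Set (Fin k') := {i | ∃ x, Tendsto (fun n => c (ψ n) i) atTop (𝓝 x)} with hI
  have hxlim' : ∀ i : Fin k', ∃ x : X, i ∈ I → Tendsto (fun n => c (ψ n) i) atTop (𝓝 x) := by
    intro i
    by_cases h : i ∈ I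
    · exact ⟨h.choose, fun _ => h.choose_spec⟩
    · exact ⟨x₁, fun hh => absurd hh h⟩
  choose xlim hxlim using hxlim'
  have hesc : ∀ i : Fin k', i ∉ I → Tendsto (fun n => dist x₁ (c (ψ n) i)) atTop atTop := by
    intro i hi
    rcases hdich i with h | h
    · exact absurd h hi
    · exact h
  have hTmem : ∀ j (i : Fin k'), c (ψ j) i ∈ R (φ (ψ j)) := by
    intro j i
    have hmem : c (ψ j) i ∈ T (ψ j) := by rw [← hc (ψ j)]; exact mem_range_self i
    exact (hTfeas (ψ j)).1 hmem
  have hTne : ∀ j, (T (ψ j)).Nonempty := fun j => (hTfeas (ψ j)).2.2.1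
  have hWTj : ∀ j, Wp p (T (ψ j)) (μ (φ (ψ j))) < m - ε/2 := fun j => hTW (ψ j)
  rcases I.eq_empty_or_nonempty with hIe | hIne
  · -- all centers escape to infinity: contradiction with positive mass on a ball
    obtain ⟨r, hr1, hrν⟩ : ∃ r : ℕ, 1 ≤ r ∧ (1/2 : ℝ≥0∞) < ν (Metric.ball x₁ r) := by
      have hmono : Monotone (fun q : ℕ => Metric.ball x₁ (q:ℝ)) := fun a b hab =>
        Metric.ball_subset_ball (by exact_mod_cast hab)
      have htend := tendsto_measure_iUnion_atTop (μ := ν) hmono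
      rw [Metric.iUnion_ball_nat, measure_univ] at htend
      have hev := htend.eventually (eventually_gt_nhds (by norm_num : (1/2:ℝ≥0∞) < 1))
      obtain ⟨r, hr⟩ := (hev.and (eventually_ge_atTop 1)).exists
      exact ⟨r, hr.2, hr.1⟩
    have hr0 : (0:ℝ) < r := by exact_mod_cast hr1
    have hcut_ν : (1/2:ℝ) < ∫ y, (cutoff x₁ r) y ∂ ν := by
      have hind : ∫ y, (Metric.ball x₁ (r:ℝ)).indicator 1 y ∂ ν
          = (ν (Metric.ball x₁ (r:ℝ))).toReal := integral_indicator_one measurableSet_ball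
      have hmono2 := integral_mono (μ := ν)
        (f := fun y => (Metric.ball x₁ (r:ℝ)).indicator 1 y)
        (g := fun y => (cutoff x₁ (r:ℝ)) y)
        ((integrable_const (1:ℝ)).indicator measurableSet_ball)
        ((cutoff x₁ r).integrable ν) ?_
      · have h2 := (ENNReal.toReal_lt_toReal (by norm_num) (measure_ne_top ν _)).2 hrν
        norm_num at h2
        rw [hind] at hmono2
        linarith
      · intro y
        dsimp only
        by_cases hy : y ∈ Metric.ball x₁ (r:ℝ)
        · rw [indicator_of_mem hy]
          rw [cutoff_eq_one hr0 (le_of_lt (mem_ball'.1 hy))]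
          norm_num
        · rw [indicator_of_notMem hy]
          exact cutoff_nonneg _ _ _
    set D : ℝ := 2*|m| + 2 with hD
    have hD1 : (1:ℝ) ≤ D := by
      have := abs_nonneg m
      rw [hD]; linarith
    have hDp : D ≤ D ^ p := by
      calc D = D ^ (1:ℝ) := (Real.rpow_one D).symm
        _ ≤ D ^ p := Real.rpow_le_rpow_of_exponent_le hD1 hp
    have hDp0 : (0:ℝ) ≤ D ^ p := Real.rpow_nonneg (by linarith) p
    have hevE : ∀ᶠ j in atTop, ∀ i : Fin k', 2*r + D ≤ dist x₁ (c (ψ j) i) := by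
      rw [Filter.eventually_all]
      intro i
      exact (hesc i (by simp [hIe])).eventually_ge_atTop _
    have hevC : ∀ᶠ j in atTop, (1/2:ℝ) < ∫ y, (cutoff x₁ r) y ∂ (μ (φ (ψ j))) :=
      ((hbcf (cutoff x₁ r)).comp hσ).eventually_const_lt hcut_ν
    obtain ⟨j, hjE, hjC⟩ := (hevE.and hevC).exists
    have hptE : ∀ y, D ^ p * (cutoff x₁ r) y ≤ infDist y (T (ψ j)) ^ p := by
      intro y
      rcases le_or_gt (dist x₁ y) (2*r) with hy | hy
      · have hinf : D ≤ infDist y (T (ψ j)) := by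
          refine le_infDist' (hTne j) (fun t ht => ?_)
          rw [← hc (ψ j)] at ht
          obtain ⟨i, rfl⟩ := ht
          have h1 := hjE i
          have h2 : dist x₁ (c (ψ j) i) ≤ dist x₁ y + dist y (c (ψ j) i) := dist_triangle _ _ _
          linarith
        have h3 : D ^ p ≤ infDist y (T (ψ j)) ^ p :=
          Real.rpow_le_rpow (by linarith) hinf hp0
        calc D ^ p * cutoff x₁ r y ≤ D ^ p * 1 :=
              mul_le_mul_of_nonneg_left (cutoff_le_one _ _ _) hDp0
          _ = D ^ p := mul_one _
          _ ≤ _ := h3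
      · rw [cutoff_eq_zero hr0 hy.le, mul_zero]
        exact Real.rpow_nonneg infDist_nonneg p
    have hint := integral_mono (μ := μ (φ (ψ j)))
      (f := fun y => D^p * cutoff x₁ r y)
      (g := fun y => infDist y (T (ψ j)) ^ p)
      (((cutoff x₁ r).integrable _).const_mul _)
      (integrable_infDist_rpow hp0 (hμ (φ (ψ j))) (hTne j)) hptE
    rw [integral_const_mul] at hint
    have hWj := hWTj j
    simp only [Wp] at hWj
    have h3 : D^p * (1/2) ≤ D^p * ∫ y, (cutoff x₁ r) y ∂ (μ (φ (ψ j))) :=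
      mul_le_mul_of_nonneg_left hjC.le hDp0
    have h4 : |m| + 1 ≤ D^p * (1/2) := by nlinarith
    have h5 := le_abs_self m
    linarith
  · -- at least one converging center: lower semicontinuity argument
    obtain ⟨i₀, hi₀⟩ := hIne
    set S' : Set X := xlim '' I with hS'
    have hS'ne : S'.Nonempty := ⟨xlim i₀, mem_image_of_mem _ hi₀⟩
    have hS'sub : S' ⊆ R₀ := by
      rintro _ ⟨i, hi, rfl⟩
      exact hLs (mem_kurLs_of_subseq hσ (fun j => hTmem j i) (hxlim i hi))
    have hS'fin : S'.Finite := (I.toFinite).image _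
    have hS'card : S'.ncard ≤ k' := by
      calc S'.ncard ≤ I.ncard := Set.ncard_image_le I.toFinite
        _ ≤ (univ : Set (Fin k')).ncard := Set.ncard_le_ncard (subset_univ I) finite_univ
        _ = k' := by simp [Set.ncard_univ]
    have hmle : m ≤ Wp p S' ν := mCost_le_wp ⟨hS'sub, hS'fin, hS'ne, hS'card⟩
    have hi₀fin : i₀ ∈ I.toFinite.toFinset := I.toFinite.mem_toFinset.2 hi₀
    have hDsum0 : ∀ j, 0 ≤ ∑ i ∈ I.toFinite.toFinset, dist (c (ψ j) i) (xlim i) :=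
      fun j => Finset.sum_nonneg fun i _ => dist_nonneg
    have hDtend : Tendsto (fun j => ∑ i ∈ I.toFinite.toFinset, dist (c (ψ j) i) (xlim i))
        atTop (𝓝 0) := by
      have hs : Tendsto (fun j => ∑ i ∈ I.toFinite.toFinset, dist (c (ψ j) i) (xlim i))
          atTop (𝓝 (∑ i ∈ I.toFinite.toFinset, (0:ℝ))) := by
        refine tendsto_finset_sum _ fun i hi => ?_
        exact tendsto_iff_dist_tendsto_zero.1 (hxlim i (I.toFinite.mem_toFinset.1 hi))
      simpa using hs
    -- the key bound for each truncation parameter mm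
    have hkey : ∀ mm : ℕ,
        ∫ y, (lscTest x₁ S' p hp0 ((mm:ℝ)+1) (1/((mm:ℝ)+1)) (mm:ℝ) (Nat.cast_nonneg mm)) y ∂ ν
          ≤ m - ε/2 := by
      intro mm
      set r : ℝ := (mm:ℝ)+1 with hrdef
      have hr0 : 0 < r := by positivity
      set δ₀ : ℝ := 1/((mm:ℝ)+1) with hδ₀def
      have hδ₀pos : 0 < δ₀ := by positivity
      set C₀ : ℝ := dist x₁ (xlim i₀) with hC₀
      have hev1 : ∀ᶠ j in atTop, ∑ i ∈ I.toFinite.toFinset, dist (c (ψ j) i) (xlim i) ≤ δ₀ :=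
        (hDtend.eventually_lt_const hδ₀pos).mono fun j hj => hj.le
      have hev2 : ∀ᶠ j in atTop, ∀ i : Fin k', i ∉ I → 4*r + C₀ ≤ dist x₁ (c (ψ j) i) := by
        rw [Filter.eventually_all]
        intro i
        by_cases hi : i ∈ I
        · exact Filter.Eventually.of_forall fun j hcontr => absurd hi hcontr
        · exact ((hesc i hi).eventually_ge_atTop _).mono fun j hj _ => hj
      have hptineq : ∀ᶠ j in atTop,
          ∫ y, (lscTest x₁ S' p hp0 r δ₀ (mm:ℝ) (Nat.cast_nonneg mm)) y ∂ (μ (φ (ψ j)))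
            ≤ Wp p (T (ψ j)) (μ (φ (ψ j))) := by
        filter_upwards [hev1, hev2] with j hj1 hj2
        refine integral_mono ((lscTest x₁ S' p hp0 r δ₀ (mm:ℝ) _).integrable _)
          (integrable_infDist_rpow hp0 (hμ (φ (ψ j))) (hTne j)) (fun y => ?_)
        rw [lscTest_apply]
        rcases le_or_gt (dist x₁ y) (2*r) with hy | hy
        · have hmax : max (infDist y S' - δ₀) 0 ≤ infDist y (T (ψ j)) := by
            refine le_infDist' (hTne j) (fun t ht => ?_)
            rw [← hc (ψ j)] at ht
            obtain ⟨i, rfl⟩ := ht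
            by_cases hi : i ∈ I
            · have h1 : infDist y S' ≤ dist y (xlim i) :=
                infDist_le_dist_of_mem (mem_image_of_mem _ hi)
              have h2 : dist y (xlim i) ≤ dist y (c (ψ j) i) + dist (c (ψ j) i) (xlim i) :=
                dist_triangle _ _ _
              have h3 : dist (c (ψ j) i) (xlim i)
                  ≤ ∑ i ∈ I.toFinite.toFinset, dist (c (ψ j) i) (xlim i) :=
                Finset.single_le_sum (f := fun i => dist (c (ψ j) i) (xlim i))
                  (fun _ _ => dist_nonneg) (I.toFinite.mem_toFinset.2 hi)
              have h4 : infDist y S' - δ₀ ≤ dist y (c (ψ j) i) := by linarith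
              exact max_le h4 dist_nonneg
            · have h1 := hj2 i hi
              have h2 : dist x₁ (c (ψ j) i) ≤ dist x₁ y + dist y (c (ψ j) i) :=
                dist_triangle _ _ _
              have h3 : infDist y S' ≤ dist y (xlim i₀) :=
                infDist_le_dist_of_mem (mem_image_of_mem _ hi₀)
              have h4 : dist y (xlim i₀) ≤ dist y x₁ + C₀ := dist_triangle _ _ _
              have h5 : dist y x₁ = dist x₁ y := dist_comm _ _
              have h6 : infDist y S' - δ₀ ≤ dist y (c (ψ j) i) := by linarith
              exact max_le h6 dist_nonneg
          have h6 : (max (infDist y S' - δ₀) 0) ^ p ≤ infDist y (T (ψ j)) ^ p :=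
            Real.rpow_le_rpow (le_max_right _ _) hmax hp0
          have h7 : 0 ≤ min ((max (infDist y S' - δ₀) 0) ^ p) (mm:ℝ) :=
            le_min (Real.rpow_nonneg (le_max_right _ _) p) (Nat.cast_nonneg mm)
          calc cutoff x₁ r y * min ((max (infDist y S' - δ₀) 0) ^ p) (mm:ℝ)
              ≤ 1 * min ((max (infDist y S' - δ₀) 0) ^ p) (mm:ℝ) :=
                mul_le_mul_of_nonneg_right (cutoff_le_one _ _ _) h7
            _ = min ((max (infDist y S' - δ₀) 0) ^ p) (mm:ℝ) := one_mul _
            _ ≤ (max (infDist y S' - δ₀) 0) ^ p := min_le_left _ _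
            _ ≤ _ := h6
        · rw [cutoff_eq_zero hr0 hy.le, zero_mul]
          exact Real.rpow_nonneg infDist_nonneg p
      refine le_of_tendsto ((hbcf (lscTest x₁ S' p hp0 r δ₀ (mm:ℝ) (Nat.cast_nonneg mm))).comp hσ) ?_
      filter_upwards [hptineq] with j hj
      exact hj.trans (hWTj j).le
    -- dominated convergence in the truncation parameter
    have hdom : Tendsto (fun mm : ℕ =>
        ∫ y, (lscTest x₁ S' p hp0 ((mm:ℝ)+1) (1/((mm:ℝ)+1)) (mm:ℝ) (Nat.cast_nonneg mm)) y ∂ ν)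
        atTop (𝓝 (Wp p S' ν)) := by
      simp only [Wp]
      refine tendsto_integral_of_dominated_convergence (fun y => infDist y S' ^ p)
        (fun mm => ((lscTest x₁ S' p hp0 ((mm:ℝ)+1) (1/((mm:ℝ)+1)) (mm:ℝ)
          (Nat.cast_nonneg mm)).continuous).aestronglyMeasurable)
        (integrable_infDist_rpow hp0 hν hS'ne)
        (fun mm => Filter.Eventually.of_forall (fun y => ?_))
        (Filter.Eventually.of_forall (fun y => ?_))
      · rw [lscTest_apply]
        have h7 : 0 ≤ min ((max (infDist y S' - 1/((mm:ℝ)+1)) 0) ^ p) (mm:ℝ) :=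
          le_min (Real.rpow_nonneg (le_max_right _ _) p) (Nat.cast_nonneg mm)
        rw [Real.norm_of_nonneg (mul_nonneg (cutoff_nonneg _ _ _) h7)]
        have h8 : max (infDist y S' - 1/((mm:ℝ)+1)) 0 ≤ infDist y S' := by
          have hpos : (0:ℝ) < 1/((mm:ℝ)+1) := by positivity
          exact max_le (by linarith [infDist_nonneg (x := y) (s := S')]) infDist_nonneg
        have h9 : (max (infDist y S' - 1/((mm:ℝ)+1)) 0) ^ p ≤ infDist y S' ^ p :=
          Real.rpow_le_rpow (le_max_right _ _) h8 hp0
        calc cutoff x₁ ((mm:ℝ)+1) y * min ((max (infDist y S' - 1/((mm:ℝ)+1)) 0) ^ p) (mm:ℝ)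
            ≤ 1 * min ((max (infDist y S' - 1/((mm:ℝ)+1)) 0) ^ p) (mm:ℝ) :=
              mul_le_mul_of_nonneg_right (cutoff_le_one _ _ _) h7
          _ = min ((max (infDist y S' - 1/((mm:ℝ)+1)) 0) ^ p) (mm:ℝ) := one_mul _
          _ ≤ (max (infDist y S' - 1/((mm:ℝ)+1)) 0) ^ p := min_le_left _ _
          _ ≤ infDist y S' ^ p := h9
      · have hin : Tendsto (fun mm : ℕ => (max (infDist y S' - 1/((mm:ℝ)+1)) 0) ^ p) atTop
            (𝓝 (infDist y S' ^ p)) := by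
          have h1 : Tendsto (fun mm : ℕ => infDist y S' - 1/((mm:ℝ)+1)) atTop
              (𝓝 (infDist y S')) := by
            have h0 := tendsto_one_div_add_atTop_nhds_zero_nat (𝕜 := ℝ)
            have h0' := Filter.Tendsto.sub
              (tendsto_const_nhds (X := ℝ) (α := ℕ) (f := atTop) (x := infDist y S')) h0
            simpa using h0'
          have h2 := h1.max (tendsto_const_nhds (X := ℝ) (α := ℕ) (f := atTop) (x := (0:ℝ)))
          rw [max_eq_left infDist_nonneg] at h2
          exact h2.rpow_const (Or.inr hp0)
        have hev : ∀ᶠ mm : ℕ in atTop,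
            (lscTest x₁ S' p hp0 ((mm:ℝ)+1) (1/((mm:ℝ)+1)) (mm:ℝ) (Nat.cast_nonneg mm)) y
              = (max (infDist y S' - 1/((mm:ℝ)+1)) 0) ^ p := by
          have hevc : ∀ᶠ mm : ℕ in atTop, dist x₁ y ≤ (mm:ℝ)+1 := by
            filter_upwards [tendsto_natCast_atTop_atTop.eventually_ge_atTop (dist x₁ y)] with mm h
            linarith
          have hevm : ∀ᶠ mm : ℕ in atTop,
              (max (infDist y S' - 1/((mm:ℝ)+1)) 0) ^ p ≤ (mm:ℝ) := by
            filter_upwards [hin.eventually_lt_const (lt_add_one (infDist y S' ^ p)),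
              tendsto_natCast_atTop_atTop.eventually_ge_atTop (infDist y S' ^ p + 1)] with mm h1 h2
            linarith
          filter_upwards [hevc, hevm] with mm h1 h2
          rw [lscTest_apply, cutoff_eq_one (by positivity) h1, one_mul, min_eq_left h2]
        exact Tendsto.congr' (hev.mono fun mm h => h.symm) hin
    have hfin : Wp p S' ν ≤ m - ε/2 := le_of_tendsto hdom (Filter.Eventually.of_forall hkey)
    linarith

end Main

end Stmt13Aux

/-- Convergence of optimal clustering costs: under Wasserstein convergence of measures and
Kuratowski convergence of the domains, if `(μ,k,R)` is non-singular then
`m_{k',p}(μ_n,R_n) → m_{k',p}(μ,R)` for every `1 ≤ k' ≤ k`. -/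
theorem stmt13 {X : Type*} [MetricSpace X] [ProperSpace X] [MeasurableSpace X] [BorelSpace X]
    (p : ℝ) (hp : 1 ≤ p) (μ : ℕ → Measure X) (ν : Measure X)
    [∀ n, IsProbabilityMeasure (μ n)] [IsProbabilityMeasure ν]
    (hμ : ∀ n, FinMom p (μ n)) (hν : FinMom p ν) (hconv : WassTendsto p μ ν)
    (k : ℕ) (hk : 1 ≤ k)
    (R : ℕ → Set X) (R₀ : Set X) (hRc : ∀ n, IsClosed (R n)) (hR₀ : IsClosed R₀)
    (hR₀ne : R₀.Nonempty) (hLi : KurLi R = R₀) (hLs : KurLs R = R₀)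
    (hns : ∀ j : ℕ, 1 ≤ j → j < k → mCost p ν (j + 1) R₀ < mCost p ν j R₀) :
    ∀ k' : ℕ, 1 ≤ k' → k' ≤ k →
      Tendsto (fun n => mCost p (μ n) k' (R n)) atTop (𝓝 (mCost p ν k' R₀)) := by
  intro k' hk'1 _hk'k
  obtain ⟨x₁, hmom⟩ := hconv.2
  have hbcf := hconv.1
  have hLi' : R₀ ⊆ KurLi R := by rw [hLi]
  have hLs' : KurLs R ⊆ R₀ := by rw [hLs]
  rw [tendsto_order]
  constructor
  · intro a ha
    have hε : 0 < mCost p ν k' R₀ - a := by linarith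
    have h := Stmt13Aux.lower_bound hp μ ν hμ hν hbcf x₁ hk'1 hRc hR₀ne hLi' hLs' hε
    exact h.mono fun n hn => by linarith
  · intro a ha
    have hε : 0 < a - mCost p ν k' R₀ := by linarith
    have h := Stmt13Aux.upper_bound hp μ ν hμ hν hbcf x₁ hmom hk'1 hRc hR₀ne hLi' hε
    exact h.mono fun n hn => by linarith
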